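/- Let δ, κ > 0, μ ≥ 0, let β be the unique solution in (0, ∞) of tanh(√(2δ)·β) = δ(2κβ − δ)/(κ√(2δ)), set A = −κ/(δ² cosh(√(2δ)β)), and define u(x) = A cosh(√(2δ)x) + (κ/δ)x² + (κ + δμ)/δ² for x ∈ [0, β]. Then u''(x) > 0 for all x ∈ [0, β), u''(β) = 0, u'(0) = 0, u'(β) = 1, and consequently 0 ≤ u'(x) ≤ 1 for all x ∈ [0, β]. -/

import Mathlib

/-- With `β` the unique positive root of the free-boundary equation and
`A = −κ/(δ² cosh(√(2δ)β))`, the function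
`u(x) = A cosh(√(2δ)x) + (κ/δ)x² + (κ + δμ)/δ²` satisfies `u'' > 0` on `[0, β)`,
`u''(β) = 0`, `u'(0) = 0`, `u'(β) = 1`, and `0 ≤ u' ≤ 1` on `[0, β]`. -/
theorem statement2 (δ κ μ β A : ℝ) (hδ : 0 < δ) (hκ : 0 < κ) (hμ : 0 ≤ μ) (hβ : 0 < β)
    (heq : Real.tanh (Real.sqrt (2*δ) * β) = δ * (2*κ*β - δ) / (κ * Real.sqrt (2*δ)))
    (hA : A = -κ / (δ^2 * Real.cosh (Real.sqrt (2*δ) * β)))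
    (u : ℝ → ℝ)
    (hu : ∀ x : ℝ, u x = A * Real.cosh (Real.sqrt (2*δ) * x) + (κ/δ) * x^2 + (κ + δ*μ)/δ^2) :
    (∀ x : ℝ, 0 ≤ x → x < β → 0 < deriv (deriv u) x) ∧
    deriv (deriv u) β = 0 ∧
    deriv u 0 = 0 ∧
    deriv u β = 1 ∧
    (∀ x : ℝ, 0 ≤ x → x ≤ β → 0 ≤ deriv u x ∧ deriv u x ≤ 1) := by
  set s := Real.sqrt (2*δ) with hs_def
  have hs : 0 < s := Real.sqrt_pos.mpr (by linarith)
  have hs2 : s^2 = 2*δ := Real.sq_sqrt (by linarith)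
  have hueq : u = fun x => A * Real.cosh (s * x) + (κ/δ) * x^2 + (κ + δ*μ)/δ^2 :=
    funext hu
  have hd1 : ∀ x : ℝ, HasDerivAt u (A * s * Real.sinh (s*x) + (2*κ/δ) * x) x := by
    intro x
    rw [hueq]
    have h := ((Real.hasDerivAt_cosh (s*x)).comp x ((hasDerivAt_id x).const_mul s)).const_mul A
    have h2 := (hasDerivAt_pow 2 x).const_mul (κ/δ)
    have h3 := (h.add h2).add_const ((κ+δ*μ)/δ^2)
    refine HasDerivAt.congr_deriv h3 ?_
    push_cast
    ring
  have hdu : deriv u = fun x => A * s * Real.sinh (s*x) + (2*κ/δ) * x :=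
    funext fun x => (hd1 x).deriv
  have hd2 : ∀ x : ℝ, HasDerivAt (deriv u) (A * s^2 * Real.cosh (s*x) + 2*κ/δ) x := by
    intro x
    rw [hdu]
    have h := ((Real.hasDerivAt_sinh (s*x)).comp x ((hasDerivAt_id x).const_mul s)).const_mul (A*s)
    have h2 := (hasDerivAt_id x).const_mul (2*κ/δ)
    have h3 := h.add h2
    refine HasDerivAt.congr_deriv h3 ?_
    ring
  have hddu : deriv (deriv u) = fun x => A * s^2 * Real.cosh (s*x) + 2*κ/δ :=
    funext fun x => (hd2 x).deriv
  have hcoshβ : 0 < Real.cosh (s*β) := Real.cosh_pos _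
  -- second derivative formula
  have hform : ∀ x : ℝ, deriv (deriv u) x =
      (2*κ/δ) * (1 - Real.cosh (s*x) / Real.cosh (s*β)) := by
    intro x
    rw [hddu]
    simp only
    rw [hA, hs2]
    field_simp
    ring
  have hpos : ∀ x : ℝ, 0 ≤ x → x < β → 0 < deriv (deriv u) x := by
    intro x hx hxβ
    rw [hform]
    have hlt : Real.cosh (s*x) < Real.cosh (s*β) := by
      rw [Real.cosh_lt_cosh]
      rw [abs_of_nonneg (by positivity), abs_of_nonneg (by positivity)]
      exact mul_lt_mul_of_pos_left hxβ hs
    have : Real.cosh (s*x) / Real.cosh (s*β) < 1 := (div_lt_one hcoshβ).mpr hlt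
    have h1 : 0 < 2*κ/δ := by positivity
    nlinarith
  have hβ0 : deriv (deriv u) β = 0 := by
    rw [hform]
    field_simp
    ring
  have hd0 : deriv u 0 = 0 := by
    rw [hdu]; simp
  have hdβ : deriv u β = 1 := by
    rw [hdu]
    simp only
    rw [Real.tanh_eq_sinh_div_cosh] at heq
    have hks : κ * s ≠ 0 := by positivity
    have hsinh : Real.sinh (s*β) = δ * (2*κ*β - δ) * Real.cosh (s*β) / (κ * s) := by
      field_simp at heq ⊢
      linarith [heq]
    rw [hA, hsinh]
    have hδ2 : (δ:ℝ)^2 ≠ 0 := by positivity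
    field_simp
    ring
  refine ⟨hpos, hβ0, hd0, hdβ, ?_⟩
  have hmono : StrictMonoOn (deriv u) (Set.Icc 0 β) := by
    apply StrictMonoOn.mono (s := Set.Icc 0 β) ?_ le_rfl
    apply strictMonoOn_of_deriv_pos (convex_Icc 0 β)
    · exact (Continuous.continuousOn (by rw [hdu]; fun_prop))
    · intro x hx
      rw [interior_Icc] at hx
      exact hpos x hx.1.le hx.2
  intro x hx hxβ
  constructor
  · have := hmono.monotoneOn ⟨le_rfl, hβ.le⟩ ⟨hx, hxβ⟩ hx
    rw [hd0] at this; exact this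
  · have := hmono.monotoneOn ⟨hx, hxβ⟩ ⟨hβ.le, le_rfl⟩ hxβ
    rw [hdβ] at this; exact this
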